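/- Let d ≥ 1, let L be a unimodular lattice in ℝ^d with L = ℤ^d M₀ for M₀ ∈ SL(d,ℝ), let α ∈ ℝ^d, let N ≥ 1 be an integer and set N₊ = N + 1/2. Then for every 1 ≤ n ≤ N, δ*_{n,N} = N₊^{−1/d} · F( A_{N₊}(α), n/N₊ ). -/

import Mathlib

open Matrix Set Pointwise

/-- The point of the lattice `ℤ^d M₀` corresponding to the integer row vector `w`. -/
noncomputable def latticeVec {d : ℕ} (M₀ : Matrix (Fin d) (Fin d) ℝ) (w : Fin d → ℤ) :
    Fin d → ℝ :=
  (fun i => (w i : ℝ)) ᵥ* M₀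

/-- `δ*_{n,N}`: the smallest positive distance, in the maximum metric (the sup norm on
`Fin d → ℝ`), from `n α` to a point `m α + ℓ` with `1 ≤ m ≤ N` and `ℓ ∈ ℤ^d M₀`. -/
noncomputable def deltaStar {d : ℕ} (M₀ : Matrix (Fin d) (Fin d) ℝ) (α : Fin d → ℝ)
    (N n : ℕ) : ℝ :=
  sInf { r : ℝ | ∃ (m : ℕ) (w : Fin d → ℤ), 1 ≤ m ∧ m ≤ N ∧
    r = ‖(n : ℝ) • α - (m : ℝ) • α - latticeVec M₀ w‖ ∧ 0 < r }

/-- `g_N^*(α, ℤ^d M₀)`: the number of distinct values among `δ*_{1,N}, …, δ*_{N,N}`. -/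
noncomputable def gStar {d : ℕ} (M₀ : Matrix (Fin d) (Fin d) ℝ) (α : Fin d → ℝ) (N : ℕ) : ℕ :=
  { x : ℝ | ∃ n : ℕ, 1 ≤ n ∧ n ≤ N ∧ x = deltaStar M₀ α N n }.ncard

/-- The point of the lattice `ℤ^{d+1} M` corresponding to the integer row vector `w`
(row vectors acting on the right). -/
noncomputable def latPoint {d : ℕ} (M : Matrix (Fin (d + 1)) (Fin (d + 1)) ℝ)
    (w : Fin (d + 1) → ℤ) : Fin (d + 1) → ℝ :=
  (fun i => (w i : ℝ)) ᵥ* M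

/-- For a point `x = (u, v) ∈ ℝ^{d+1}`, `vpart x = v ∈ ℝ^d` is the vector of the last `d`
coordinates (the first coordinate `x 0` being `u`). -/
def vpart {d : ℕ} (x : Fin (d + 1) → ℝ) : Fin d → ℝ := fun i => x i.succ

/-- The set `S(M, t) = { ‖v‖_∞ : (u, v) ∈ ℤ^{d+1} M, ‖v‖_∞ > 0, −t < u < 1 − t }`.
(The norm on `Fin d → ℝ` is the maximum norm.) -/
noncomputable def FSet (d : ℕ) (M : Matrix (Fin (d + 1)) (Fin (d + 1)) ℝ) (t : ℝ) :
    Set ℝ :=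
  { r : ℝ | ∃ w : Fin (d + 1) → ℤ, r = ‖vpart (latPoint M w)‖ ∧ 0 < r ∧
      -t < latPoint M w 0 ∧ latPoint M w 0 < 1 - t }

/-- `F(M, t) = min S(M, t)`. -/
noncomputable def Fval (d : ℕ) (M : Matrix (Fin (d + 1)) (Fin (d + 1)) ℝ) (t : ℝ) : ℝ :=
  sInf (FSet d M t)

/-- Reindex a block matrix over `Fin 1 ⊕ Fin d` as a matrix over `Fin (d + 1)` (the `Fin 1`
block corresponding to the first coordinate). -/
def blockEmbed (d : ℕ) (B : Matrix (Fin 1 ⊕ Fin d) (Fin 1 ⊕ Fin d) ℝ) :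
    Matrix (Fin (d + 1)) (Fin (d + 1)) ℝ :=
  Matrix.reindex (finSumFinEquiv.trans (finCongr (Nat.add_comm 1 d)))
    (finSumFinEquiv.trans (finCongr (Nat.add_comm 1 d))) B

/-- The matrix `A_s(α) = [[1, 0], [0, M₀]] · [[1, α], [0, 1_d]] · [[s⁻¹, 0], [0, s^{1/d}·1_d]]`
in `SL(d+1, ℝ)`, with `α` a row vector. -/
noncomputable def AMat (d : ℕ) (M₀ : Matrix (Fin d) (Fin d) ℝ) (α : Fin d → ℝ) (s : ℝ) :
    Matrix (Fin (d + 1)) (Fin (d + 1)) ℝ :=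
  blockEmbed d (Matrix.fromBlocks 1 0 0 M₀) *
  blockEmbed d (Matrix.fromBlocks 1 (Matrix.of fun _ j => α j) 0 1) *
  blockEmbed d (Matrix.fromBlocks (Matrix.of fun _ _ => s⁻¹) 0 0
    ((s ^ ((1 : ℝ) / (d : ℝ))) • 1))


lemma blockEmbed_mul (d : ℕ) (A B : Matrix (Fin 1 ⊕ Fin d) (Fin 1 ⊕ Fin d) ℝ) :
    blockEmbed d A * blockEmbed d B = blockEmbed d (A * B) := by
  simp only [blockEmbed, Matrix.reindex_apply, Matrix.submatrix_mul_equiv]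

lemma embedEquiv_inl (d : ℕ) :
    (finSumFinEquiv.trans (finCongr (Nat.add_comm 1 d))) (Sum.inl 0) = (0 : Fin (d+1)) := rfl

lemma embedEquiv_inr (d : ℕ) (j : Fin d) :
    (finSumFinEquiv.trans (finCongr (Nat.add_comm 1 d))) (Sum.inr j) = j.succ := by
  ext; simp [finSumFinEquiv, Fin.natAdd, Nat.add_comm]

lemma latPoint_blockEmbed (d : ℕ) (P : Matrix (Fin 1 ⊕ Fin d) (Fin 1 ⊕ Fin d) ℝ)
    (w : Fin (d+1) → ℤ) (k : Fin 1 ⊕ Fin d) :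
    latPoint (blockEmbed d P) w ((finSumFinEquiv.trans (finCongr (Nat.add_comm 1 d))) k) =
      (((fun i => (w i : ℝ)) ∘ (finSumFinEquiv.trans (finCongr (Nat.add_comm 1 d)))) ᵥ* P) k := by
  rw [latPoint, blockEmbed, Matrix.reindex_apply, Matrix.submatrix_vecMul_equiv]
  simp

lemma AMat_eq (d : ℕ) (M₀ : Matrix (Fin d) (Fin d) ℝ) (α : Fin d → ℝ) (s : ℝ) :
    AMat d M₀ α s = blockEmbed d (Matrix.fromBlocks (Matrix.of fun _ _ => s⁻¹)
      ((s ^ ((1:ℝ)/(d:ℝ))) • Matrix.of fun _ j => α j) 0 ((s ^ ((1:ℝ)/(d:ℝ))) • M₀)) := by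
  rw [AMat, blockEmbed_mul, blockEmbed_mul, Matrix.fromBlocks_multiply, Matrix.fromBlocks_multiply]
  simp [Matrix.mul_smul]

lemma latPoint_AMat_zero (d : ℕ) (M₀ : Matrix (Fin d) (Fin d) ℝ) (α : Fin d → ℝ) (s : ℝ)
    (w : Fin (d+1) → ℤ) :
    latPoint (AMat d M₀ α s) w 0 = (w 0 : ℝ) * s⁻¹ := by
  rw [AMat_eq, ← embedEquiv_inl d, latPoint_blockEmbed, Matrix.vecMul_fromBlocks]
  simp [Matrix.vecMul, dotProduct, embedEquiv_inl]

lemma latPoint_AMat_vpart (d : ℕ) (M₀ : Matrix (Fin d) (Fin d) ℝ) (α : Fin d → ℝ) (s : ℝ)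
    (w : Fin (d+1) → ℤ) :
    vpart (latPoint (AMat d M₀ α s) w) =
      (s ^ ((1:ℝ)/(d:ℝ))) • ((w 0 : ℝ) • α + latticeVec M₀ (fun i => w i.succ)) := by
  funext j
  have h : (j : Fin d).succ = (finSumFinEquiv.trans (finCongr (Nat.add_comm 1 d))) (Sum.inr j) :=
    (embedEquiv_inr d j).symm
  rw [vpart, h, AMat_eq, latPoint_blockEmbed, Matrix.vecMul_fromBlocks]
  simp [Matrix.vecMul, dotProduct, embedEquiv_inl, embedEquiv_inr, latticeVec]
  rw [show (Fin.cast (Nat.add_comm 1 d) (Fin.castAdd d 0) : Fin (d+1)) = 0 from rfl,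
    mul_add, Finset.mul_sum]
  congr 1
  · ring
  · exact Finset.sum_congr rfl fun x _ => by ring

theorem deltaStar_eq_Fval (d : ℕ) (hd : 1 ≤ d)
    (M₀ : Matrix (Fin d) (Fin d) ℝ) (hM₀ : M₀.det = 1)
    (α : Fin d → ℝ) (N : ℕ) (hN : 1 ≤ N) (n : ℕ) (hn1 : 1 ≤ n) (hn2 : n ≤ N) :
    deltaStar M₀ α N n =
      ((N : ℝ) + 1/2) ^ (-(1 : ℝ) / (d : ℝ)) *
        Fval d (AMat d M₀ α ((N : ℝ) + 1/2)) ((n : ℝ) / ((N : ℝ) + 1/2)) := by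
  set s : ℝ := (N : ℝ) + 1/2 with hs_def
  have hs : 0 < s := by positivity
  set c : ℝ := s ^ ((1:ℝ)/(d:ℝ)) with hc_def
  have hc : 0 < c := Real.rpow_pos_of_pos hs _
  have hcinv : s ^ (-(1 : ℝ) / (d : ℝ)) = c⁻¹ := by
    rw [neg_div, Real.rpow_neg hs.le]
  have hnorm : ∀ w : Fin (d+1) → ℤ,
      ‖vpart (latPoint (AMat d M₀ α s) w)‖ =
        c * ‖(w 0 : ℝ) • α + latticeVec M₀ (fun i => w i.succ)‖ := by
    intro w
    rw [latPoint_AMat_vpart, norm_smul, Real.norm_eq_abs, abs_of_pos hc]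
  have hset : { r : ℝ | ∃ (m : ℕ) (w : Fin d → ℤ), 1 ≤ m ∧ m ≤ N ∧
      r = ‖(n : ℝ) • α - (m : ℝ) • α - latticeVec M₀ w‖ ∧ 0 < r } =
      c⁻¹ • FSet d (AMat d M₀ α s) ((n : ℝ) / s) := by
    ext r
    constructor
    · rintro ⟨m, w', hm1, hm2, hr, hrpos⟩
      set w : Fin (d+1) → ℤ := Fin.cons ((m : ℤ) - n) w' with hw_def
      have hw0 : w 0 = (m : ℤ) - n := rfl
      have hws : ∀ i, w i.succ = w' i := fun i => rfl
      have hvec : (w 0 : ℝ) • α + latticeVec M₀ (fun i => w i.succ) =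
          -((n : ℝ) • α - (m : ℝ) • α - latticeVec M₀ w') := by
        rw [hw0]
        push_cast
        simp only [hws]
        module
      refine Set.mem_smul_set.mpr ⟨c * r, ⟨w, ?_, ?_, ?_, ?_⟩, ?_⟩
      · rw [hnorm, hvec, norm_neg, ← hr]
      · positivity
      · rw [latPoint_AMat_zero, hw0]
        rw [show -((n:ℝ)/s) = (-(n:ℝ)) * s⁻¹ by rw [div_eq_mul_inv]; ring,
          mul_lt_mul_iff_of_pos_right (inv_pos.2 hs)]
        push_cast
        have : (0:ℝ) < m := by exact_mod_cast hm1
        linarith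
      · rw [latPoint_AMat_zero, hw0]
        rw [show 1 - (n:ℝ)/s = (s - n) * s⁻¹ by field_simp,
          mul_lt_mul_iff_of_pos_right (inv_pos.2 hs)]
        push_cast
        have : (m:ℝ) ≤ N := by exact_mod_cast hm2
        rw [hs_def]; linarith
      · rw [smul_eq_mul, ← mul_assoc, inv_mul_cancel₀ hc.ne', one_mul]
    · rintro ⟨y, ⟨w, hy, hypos, hlo, hhi⟩, hry⟩
      simp only [smul_eq_mul] at hry
      rw [latPoint_AMat_zero] at hlo hhi
      have hlo' : -(n:ℝ) < (w 0 : ℝ) := by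
        rw [show -((n:ℝ)/s) = (-(n:ℝ)) * s⁻¹ by rw [div_eq_mul_inv]; ring,
          mul_lt_mul_iff_of_pos_right (inv_pos.2 hs)] at hlo
        exact hlo
      have hhi' : (w 0 : ℝ) < s - n := by
        rw [show 1 - (n:ℝ)/s = (s - n) * s⁻¹ by field_simp,
          mul_lt_mul_iff_of_pos_right (inv_pos.2 hs)] at hhi
        exact hhi
      have hlo'' : -(n:ℤ) < w 0 := by exact_mod_cast hlo'
      have hhi'' : w 0 ≤ (N:ℤ) - n := by
        have h1 : (w 0 : ℝ) < ((N:ℤ) - n : ℤ) + 1 := by push_cast; rw [hs_def] at hhi'; linarith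
        exact Int.lt_add_one_iff.mp (by exact_mod_cast h1)
      set m : ℕ := (w 0 + n).toNat with hm_def
      have hm0 : (0:ℤ) < w 0 + n := by linarith
      have hmz : (m : ℤ) = w 0 + n := Int.toNat_of_nonneg hm0.le
      have hm1 : 1 ≤ m := by omega
      have hm2 : m ≤ N := by omega
      refine ⟨m, fun i => w i.succ, hm1, hm2, ?_, ?_⟩
      · have hvec : (n : ℝ) • α - (m : ℝ) • α - latticeVec M₀ (fun i => w i.succ) =
            -((w 0 : ℝ) • α + latticeVec M₀ (fun i => w i.succ)) := by
          have hmr : (m : ℝ) = (w 0 : ℝ) + n := by exact_mod_cast hmz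
          rw [hmr]
          module
        rw [hvec, norm_neg, ← hry, hy, hnorm, ← mul_assoc,
          inv_mul_cancel₀ hc.ne', one_mul]
      · rw [← hry]
        positivity
  rw [deltaStar, hset, Real.sInf_smul_of_nonneg (inv_nonneg.2 hc.le), Fval, hcinv, smul_eq_mul]
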